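/- Let K be a field with char K ∉ {2,3} containing an element i with i² = −1, and let e, f ∈ K satisfy e ≠ 0, f ≠ 0 and e² ≠ 4f. Then the Weierstrass curve E': y² = x(x² − 2(e²+4f)x + (e²−4f)²) over K has nonzero discriminant (so is an elliptic curve), and the point (4f − e², 2ie(4f − e²)) lies on E' and has exact order 4 in E'(K). Equivalently, E' coincides with the curve E_{e',f'}: y² = x(x² + (e'²−2f')x + f'²) for e' = 2ie and f' = 4f − e². -/

import Mathlib

open WeierstrassCurve

/-- The Weierstrass curve `y² = x(x² + ax + b)`, i.e. `a₁ = a₃ = a₆ = 0`, `a₂ = a`,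
`a₄ = b`. -/
def Wab {K : Type*} [Field K] (a b : K) : WeierstrassCurve K :=
  { a₁ := 0, a₂ := a, a₃ := 0, a₄ := b, a₆ := 0 }

lemma some_congr {K : Type*} [Field K] {W : Affine K} {x₁ y₁ x₂ y₂ : K}
    {h₁ : W.Nonsingular x₁ y₁} {h₂ : W.Nonsingular x₂ y₂} (hx : x₁ = x₂) (hy : y₁ = y₂) :
    Affine.Point.some _ _ h₁ = Affine.Point.some _ _ h₂ := by subst hx; subst hy; rfl

open Classical in
/-- Let `K` be a field with `char K ∉ {2,3}` containing `i` with
`i² = −1`, and let `e, f ∈ K` with `e ≠ 0`, `f ≠ 0`, `e² ≠ 4f`.  Then the curve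
`E' : y² = x(x² − 2(e²+4f)x + (e²−4f)²)` has nonzero discriminant, the point
`(4f−e², 2ie(4f−e²))` lies on `E'` and has exact order `4`; equivalently `E' = E_{e',f'}`
with `e' = 2ie`, `f' = 4f−e²`. -/
theorem stmt3 {K : Type*} [Field K] (h2 : (2 : K) ≠ 0) (h3 : (3 : K) ≠ 0)
    (i : K) (hi : i ^ 2 = -1)
    (e f : K) (he : e ≠ 0) (hf : f ≠ 0) (hef : e ^ 2 ≠ 4 * f) :
    (Wab (-2 * (e ^ 2 + 4 * f)) ((e ^ 2 - 4 * f) ^ 2)).Δ ≠ 0 ∧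
    (∃ hQ : (Wab (-2 * (e ^ 2 + 4 * f)) ((e ^ 2 - 4 * f) ^ 2)).toAffine.Nonsingular
        (4 * f - e ^ 2) (2 * i * e * (4 * f - e ^ 2)),
      addOrderOf (Affine.Point.some _ _ hQ) = 4) ∧
    Wab (-2 * (e ^ 2 + 4 * f)) ((e ^ 2 - 4 * f) ^ 2) =
      Wab ((2 * i * e) ^ 2 - 2 * (4 * f - e ^ 2)) ((4 * f - e ^ 2) ^ 2) := by
  have h4f : e ^ 2 - 4 * f ≠ 0 := sub_ne_zero.2 hef
  have hX : (4 : K) * f - e ^ 2 ≠ 0 := by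
    intro h; apply h4f; linear_combination -h
  have hi0 : i ≠ 0 := by intro h; rw [h] at hi; norm_num at hi
  set W := Wab (-2 * (e ^ 2 + 4 * f)) ((e ^ 2 - 4 * f) ^ 2) with hW
  -- discriminant
  have hΔval : W.Δ = 1024 * e ^ 2 * f * (e ^ 2 - 4 * f) ^ 4 := by
    simp only [hW, Wab, WeierstrassCurve.Δ, b₂, b₄, b₆, b₈]
    ring
  have hΔ : W.Δ ≠ 0 := by
    rw [hΔval]
    have h1024 : (1024 : K) ≠ 0 := by
      have : (1024 : K) = 2 ^ 10 := by norm_num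
      rw [this]; exact pow_ne_zero _ h2
    exact mul_ne_zero (mul_ne_zero (mul_ne_zero h1024 (pow_ne_zero _ he)) hf)
      (pow_ne_zero _ h4f)
  refine ⟨hΔ, ?_, ?_⟩
  · -- the point of order 4
    set X := (4 : K) * f - e ^ 2 with hXdef
    set Y := 2 * i * e * X with hYdef
    have hY0 : Y ≠ 0 := by
      apply mul_ne_zero (mul_ne_zero (mul_ne_zero h2 hi0) he) hX
    have hEqP : W.toAffine.Equation X Y := by
      rw [Affine.equation_iff]
      simp only [hW, Wab, hYdef, hXdef]
      linear_combination (4 * e ^ 2 * (4 * f - e ^ 2) ^ 2) * hi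
    have hP : W.toAffine.Nonsingular X Y := (W.toAffine.equation_iff_nonsingular_of_Δ_ne_zero hΔ).mp hEqP
    have hEqT : W.toAffine.Equation 0 0 := by
      rw [Affine.equation_iff]; simp [hW, Wab]
    have hT : W.toAffine.Nonsingular 0 0 := (W.toAffine.equation_iff_nonsingular_of_Δ_ne_zero hΔ).mp hEqT
    refine ⟨hP, ?_⟩
    have hnegY : W.toAffine.negY X Y = -Y := by simp [hW, Wab, Affine.negY]
    have hyne : Y ≠ W.toAffine.negY X Y := by
      rw [hnegY]
      intro h
      apply hY0
      have : 2 * Y = 0 := by linear_combination h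
      exact (mul_eq_zero.mp this).resolve_left h2
    -- slope of the tangent at P
    have hL : W.toAffine.slope X X Y Y = 2 * i * e := by
      have hden : Y - -Y ≠ 0 := by
        rw [sub_neg_eq_add]
        intro h
        exact hY0 ((mul_eq_zero.mp (by linear_combination h)).resolve_left h2)
      rw [Affine.slope_of_Y_ne rfl hyne, hnegY, div_eq_iff hden]
      simp only [hW, Wab, hYdef, hXdef]
      linear_combination (8 * e ^ 4 - 32 * e ^ 2 * f) * hi
    have hx0 : W.toAffine.addX X X (W.toAffine.slope X X Y Y) = 0 := by
      rw [hL]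
      simp only [hW, Wab, Affine.addX, hXdef]
      linear_combination 4 * e ^ 2 * hi
    have hy0 : W.toAffine.addY X X Y (W.toAffine.slope X X Y Y) = 0 := by
      rw [hL]
      simp only [hW, Wab, Affine.addY, Affine.negAddY, Affine.negY, Affine.addX, hXdef, hYdef]
      linear_combination (-8 * e ^ 3 * i) * hi
    have hPP : Affine.Point.some _ _ hP + Affine.Point.some _ _ hP =
        Affine.Point.some _ _ hT := by
      rw [Affine.Point.add_self_of_Y_ne hyne]
      exact some_congr hx0 hy0
    have hTT : Affine.Point.some _ _ hT + Affine.Point.some _ _ hT = 0 := by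
      apply Affine.Point.add_self_of_Y_eq
      simp [hW, Wab, Affine.negY]
    have h4P : (4 : ℕ) • Affine.Point.some _ _ hP = 0 := by
      have : (4 : ℕ) = 2 + 2 := rfl
      rw [this, add_nsmul, two_nsmul, hPP, hTT]
    have hdvd : addOrderOf (Affine.Point.some _ _ hP) ∣ 4 :=
      addOrderOf_dvd_of_nsmul_eq_zero h4P
    have hne1 : addOrderOf (Affine.Point.some _ _ hP) ≠ 1 := by
      intro h
      exact Affine.Point.some_ne_zero hP (AddMonoid.addOrderOf_eq_one_iff.mp h)
    have hne2 : addOrderOf (Affine.Point.some _ _ hP) ≠ 2 := by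
      intro h
      have h2P : (2 : ℕ) • Affine.Point.some _ _ hP = 0 := h ▸ addOrderOf_nsmul_eq_zero _
      rw [two_nsmul, hPP] at h2P
      exact Affine.Point.some_ne_zero hT h2P
    have hmem : addOrderOf (Affine.Point.some _ _ hP) ∈ Nat.divisors 4 :=
      Nat.mem_divisors.2 ⟨hdvd, by norm_num⟩
    have : Nat.divisors 4 = {1, 2, 4} := by decide
    rw [this] at hmem
    simp only [Finset.mem_insert, Finset.mem_singleton] at hmem
    omega
  · -- equality of curves
    rw [hW]
    have ha : (-2 * (e ^ 2 + 4 * f) : K) = (2 * i * e) ^ 2 - 2 * (4 * f - e ^ 2) := by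
      linear_combination (-4 * e ^ 2) * hi
    have hb : ((e ^ 2 - 4 * f) ^ 2 : K) = (4 * f - e ^ 2) ^ 2 := by ring
    rw [Wab, Wab, ha, hb]
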